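/- Let G1 ⊂ G ⊊ R^n be domains such that G1 is midpoint convex. Then b_{G1,∞}(x,y) ≥ b_{G,∞}(x,y) for all x, y ∈ G1, where b_{D,∞}(x,y) = sup_{z ∈ ∂D} |x-y| / max{|x-z|, |y-z|}. -/
import Mathlib


open Set

/-- Barrlund distance with parameter `∞` in a domain `D`. -/
noncomputable def barrlundInf {n : ℕ} (D : Set (EuclideanSpace ℝ (Fin n)))
    (x y : EuclideanSpace ℝ (Fin n)) : ℝ :=
  sSup ((fun z => dist x y / max (dist x z) (dist y z)) '' frontier D)

/-- A connected set meeting an open set and its complement meets the frontier. -/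
lemma aux_frontier {E : Type*} [TopologicalSpace E] {s t : Set E}
    (hs : IsPreconnected s) (ht : IsOpen t) {a b : E} (ha : a ∈ s) (hat : a ∈ t)
    (hb : b ∈ s) (hbt : b ∉ t) : (s ∩ frontier t).Nonempty := by
  by_contra h
  rw [Set.not_nonempty_iff_eq_empty] at h
  have hsub : s ⊆ interior t ∪ (closure t)ᶜ := by
    intro p hp
    by_cases hpc : p ∈ closure t
    · by_cases hpi : p ∈ interior t
      · exact Or.inl hpi
      · exact absurd (Set.eq_empty_iff_forall_notMem.mp h p ⟨hp, hpc, hpi⟩) not_false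
    · exact Or.inr hpc
  have hb' : b ∉ closure t := fun hc =>
    Set.eq_empty_iff_forall_notMem.mp h b
      ⟨hb, hc, fun hbi => hbt (interior_subset hbi)⟩
  have := hs (interior t) (closure t)ᶜ isOpen_interior (isClosed_closure.isOpen_compl)
    hsub ⟨a, ha, by rwa [ht.interior_eq]⟩ ⟨b, hb, hb'⟩
  obtain ⟨p, _, hp1, hp2⟩ := this
  exact hp2 (interior_subset_closure hp1)

theorem stmt6 {n : ℕ} (G1 G : Set (EuclideanSpace ℝ (Fin n)))
    (hG1 : IsOpen G1) (hG1c : IsConnected G1)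
    (hG : IsOpen G) (hGc : IsConnected G) (hGne : G ≠ univ) (hsub : G1 ⊆ G)
    (hmid : ∀ x ∈ G1, ∀ y ∈ G1, (2⁻¹ : ℝ) • (x + y) ∈ G1)
    (x y : EuclideanSpace ℝ (Fin n)) (hx : x ∈ G1) (hy : y ∈ G1) :
    barrlundInf G x y ≤ barrlundInf G1 x y := by
  set f : EuclideanSpace ℝ (Fin n) → ℝ :=
    fun z => dist x y / max (dist x z) (dist y z) with hf
  -- f is bounded above by 2
  have hf2 : ∀ z, f z ≤ 2 := by
    intro z
    rcases (dist_nonneg.trans (le_max_left (dist x z) (dist y z))).eq_or_lt with h0 | h0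
    · simp [hf, ← h0]
    · rw [hf, div_le_iff₀ h0]
      calc dist x y ≤ dist x z + dist z y := dist_triangle x z y
        _ ≤ max (dist x z) (dist y z) + max (dist x z) (dist y z) := by
            gcongr; · exact le_max_left _ _
            · rw [dist_comm]; exact le_max_right _ _
        _ = 2 * max (dist x z) (dist y z) := by ring
  have hbdd : BddAbove (f '' frontier G1) := by
    refine ⟨2, ?_⟩
    rintro v ⟨z, _, rfl⟩
    exact hf2 z
  -- frontier G1 is nonempty
  have hG1ne : G1 ≠ univ := fun h => hGne (univ_subset_iff.mp (h ▸ hsub))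
  obtain ⟨z0, hz0⟩ : (frontier G1).Nonempty :=
    nonempty_frontier_iff.mpr ⟨hG1c.nonempty, hG1ne⟩
  have hS1 : 0 ≤ sSup (f '' frontier G1) := by
    refine le_trans (div_nonneg (dist_nonneg (x := x) (y := y))
      ((dist_nonneg (x := x) (y := z0)).trans (le_max_left (dist x z0) (dist y z0)))) ?_
    exact le_csSup hbdd ⟨z0, hz0, rfl⟩
  refine Real.sSup_le ?_ hS1
  rintro v ⟨z, hz, rfl⟩
  -- z ∈ frontier G, so z ∉ G ⊇ G1
  have hzG : z ∉ G1 := fun h => (hG.frontier_eq ▸ hz).2 (hsub h)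
  -- midpoint
  set m : EuclideanSpace ℝ (Fin n) := (2⁻¹ : ℝ) • (x + y) with hm
  have hmG1 : m ∈ G1 := hmid x hx y hy
  have hmmid : m = midpoint ℝ x y := by
    rw [midpoint_eq_smul_add, invOf_eq_inv]
  -- segment from m to z meets frontier G1
  obtain ⟨w, hwseg, hwfr⟩ :=
    aux_frontier ((convex_segment m z).isPreconnected) hG1 (left_mem_segment ℝ m z)
      hmG1 (right_mem_segment ℝ m z) hzG
  -- distance estimates
  set M := max (dist x z) (dist y z) with hM
  have hdxy : dist x y ≤ 2 * M := by
    calc dist x y ≤ dist x z + dist z y := dist_triangle x z y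
      _ ≤ M + M := by gcongr; · exact le_max_left _ _
                      · rw [dist_comm]; exact le_max_right _ _
      _ = 2 * M := by ring
  have hxm : dist x m = dist x y / 2 := by
    rw [hmmid, dist_comm, dist_midpoint_left]; simp; ring
  have hym : dist y m = dist x y / 2 := by
    rw [hmmid, dist_comm, dist_midpoint_right]; simp [dist_comm x y]; ring
  have hxw : dist x w ≤ M := by
    have := (convexOn_univ_dist x).le_on_segment (mem_univ m) (mem_univ z) hwseg
    simp only [dist_comm _ x] at this
    refine this.trans (max_le ?_ (le_max_left _ _))
    rw [hxm]; linarith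
  have hyw : dist y w ≤ M := by
    have := (convexOn_univ_dist y).le_on_segment (mem_univ m) (mem_univ z) hwseg
    simp only [dist_comm _ y] at this
    refine this.trans (max_le ?_ (le_max_right _ _))
    rw [hym]; linarith
  -- f z ≤ f w ≤ sSup
  have hfw : f z ≤ f w := by
    rcases (dist_nonneg (x := x) (y := y)).eq_or_lt with h0 | h0
    · simp only [hf, ← h0, zero_div, le_refl]
    · have hMw : 0 < max (dist x w) (dist y w) := by
        rcases le_or_gt (max (dist x w) (dist y w)) 0 with hle | hlt
        · exfalso
          have hxw0 : dist x w = 0 := le_antisymm ((le_max_left _ _).trans hle) dist_nonneg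
          have hyw0 : dist y w = 0 := le_antisymm ((le_max_right _ _).trans hle) dist_nonneg
          rw [dist_eq_zero] at hxw0 hyw0
          rw [hxw0, hyw0, dist_self] at h0
          exact lt_irrefl 0 h0
        · exact hlt
      exact div_le_div_of_nonneg_left dist_nonneg hMw (max_le hxw hyw)
  exact hfw.trans (le_csSup hbdd ⟨w, hwfr, rfl⟩)
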